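/- log(3/2) = 65/162 + (1/216) · ∑_{j=0}^∞ (-1)^j / ( 2^j · binom(j+4, 4) ), where log denotes the natural logarithm. -/

import Mathlib

open Real

lemma choose4 (j : ℕ) : (((j + 4).choose 4 : ℕ) : ℝ) * 24 =
    (j + 1) * (j + 2) * (j + 3) * (j + 4) := by
  have h := Nat.choose_mul_factorial_mul_factorial (show 4 ≤ j + 4 by omega)
  have hfac : (j + 4).factorial = (j + 1) * (j + 2) * (j + 3) * (j + 4) * j.factorial := by
    rw [show j + 4 = j + 3 + 1 from rfl, Nat.factorial_succ,
        show j + 3 = j + 2 + 1 from rfl, Nat.factorial_succ,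
        show j + 2 = j + 1 + 1 from rfl, Nat.factorial_succ, Nat.factorial_succ]
    ring
  have h4 : (j + 4 - 4) = j := by omega
  rw [h4, hfac] at h
  have hnat : (j + 4).choose 4 * 24 = (j + 1) * (j + 2) * (j + 3) * (j + 4) := by
    have hp := j.factorial_pos
    have h24 : Nat.factorial 4 = 24 := by decide
    rw [h24] at h
    have heq : (j + 4).choose 4 * 24 * j.factorial
        = (j + 1) * (j + 2) * (j + 3) * (j + 4) * j.factorial := by
      nlinarith [h]
    exact Nat.eq_of_mul_eq_mul_right hp heq
  exact_mod_cast congrArg (Nat.cast : ℕ → ℝ) hnat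

theorem statement12 :
    Real.log (3 / 2) = 65 / 162 + (1 / 216) *
      ∑' j : ℕ, (-1 : ℝ) ^ j / ((2 : ℝ) ^ j * ((j + 4).choose 4 : ℝ)) := by
  set x : ℝ := -1/2 with hx
  have hax : |x| < 1 := by rw [hx]; norm_num [abs_of_neg]
  have hL : HasSum (fun n : ℕ => x ^ (n + 1) / (n + 1)) (-log (3/2)) := by
    have h := hasSum_pow_div_log_of_abs_lt_one hax
    have h32 : (1 : ℝ) - x = 3/2 := by rw [hx]; norm_num
    rwa [h32] at h
  set f : ℕ → ℝ := fun n => x ^ (n + 1) / (n + 1) with hf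
  set T : ℝ := -log (3/2) with hT
  have h1 : HasSum (fun n => f (n + 1)) (T - f 0) := by
    refine (hasSum_nat_add_iff 1).mpr ?_
    convert hL using 1
    · rfl
    simp [Finset.sum_range_succ]
  have h2 : HasSum (fun n => f (n + 2)) (T - f 0 - f 1) := by
    refine (hasSum_nat_add_iff 2).mpr ?_
    convert hL using 1
    · rfl
    simp [Finset.sum_range_succ]
  have h3 : HasSum (fun n => f (n + 3)) (T - f 0 - f 1 - f 2) := by
    refine (hasSum_nat_add_iff 3).mpr ?_
    convert hL using 1
    · rfl
    simp [Finset.sum_range_succ]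
  have h0 : HasSum f T := hL
  have hcomb : HasSum (fun j : ℕ => (-8 : ℝ) * f j + (-48) * f (j + 1)
      + (-96) * f (j + 2) + (-64) * f (j + 3))
      ((-8) * T + (-48) * (T - f 0) + (-96) * (T - f 0 - f 1)
        + (-64) * (T - f 0 - f 1 - f 2)) :=
    (((h0.mul_left (-8)).add (h1.mul_left (-48))).add (h2.mul_left (-96))).add
      (h3.mul_left (-64))
  have hS : HasSum (fun j : ℕ => (-1 : ℝ) ^ j / ((2 : ℝ) ^ j * ((j + 4).choose 4 : ℝ)))
      (216 * log (3/2) - 260/3) := by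
    convert hcomb using 1
    · funext j
      have hc := choose4 j
      have hj1 : ((j : ℝ) + 1) ≠ 0 := by positivity
      have hj2 : ((j : ℝ) + 2) ≠ 0 := by positivity
      have hj3 : ((j : ℝ) + 3) ≠ 0 := by positivity
      have hj4 : ((j : ℝ) + 4) ≠ 0 := by positivity
      have hD : (((j:ℝ) + 1) * ((j:ℝ) + 2) * ((j:ℝ) + 3) * ((j:ℝ) + 4)) ≠ 0 := by positivity
      have h2p : ((2 : ℝ) ^ j) ≠ 0 := by positivity
      have hCD : (((j + 4).choose 4 : ℕ) : ℝ)
          = ((j:ℝ) + 1) * ((j:ℝ) + 2) * ((j:ℝ) + 3) * ((j:ℝ) + 4) / 24 := by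
        field_simp
        linarith [hc]
      rw [hCD]
      simp only [hf, hx]
      push_cast
      field_simp
      have hm : ((-1/2:ℝ))^j * 2^j = (-1)^j := by rw [← mul_pow]; norm_num
      linear_combination (-(↑j * 624 + ↑j ^ 2 * 216 + ↑j ^ 3 * 24 + 576 : ℝ)) * hm
    · have hf0 : f 0 = -1/2 := by simp [hf, hx]
      have hf1 : f 1 = 1/8 := by norm_num [hf, hx]
      have hf2 : f 2 = -1/24 := by norm_num [hf, hx]
      rw [hf0, hf1, hf2, hT]; ring
  rw [hS.tsum_eq]; ring
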